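/- arXiv:1612.05518 — 7 statements merged into one kernel-verified Lean document; each statement's English description precedes it below -/
import Mathlib

section
/- Let b ≥ 2 and L = ℓ_r M^r + ⋯ + ℓ_0 with ℓ_0 ℓ_r ≠ 0, v_k = val(ℓ_k). Then the valuation v of any nonzero formal Puiseux series solution of L y = 0 satisfies −v_r/(b^{r−1}(b−1)) ≤ v ≤ v_0/(b−1). -/
open Polynomial

noncomputable section

/-- A polynomial viewed as a Hahn series with rational exponents. -/
def polyToHahn {K : Type*} [Field K] (p : K[X]) : HahnSeries ℚ K :=
  ∑ i ∈ Finset.range (p.natDegree + 1), HahnSeries.single (i : ℚ) (p.coeff i)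

/-- The Mahler operator `y(x) ↦ y(x^b)` on Hahn series with rational exponents:
it rescales every exponent by the factor `b`. -/
def mahlerHahn {K : Type*} [Field K] (b : ℕ) (y : HahnSeries ℚ K) : HahnSeries ℚ K :=
  if hb : 0 < b then
    HahnSeries.embDomain
      (OrderEmbedding.ofStrictMono (fun q : ℚ => (b : ℚ) * q)
        (fun _ _ h => by
          have hb' : (0 : ℚ) < b := by exact_mod_cast hb
          exact mul_lt_mul_of_pos_left h hb')) y
  else 0

/-- `y` is a formal Puiseux series: its exponents are rationals
with a common denominator. -/
def IsPuiseux {K : Type*} [Field K] (y : HahnSeries ℚ K) : Prop :=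
  ∃ n : ℕ, 0 < n ∧ ∀ q ∈ y.support, ∃ m : ℤ, q = (m : ℚ) / n

/-- The action `L y = Σ_k ℓ_k(x) y(x^{b^k})` of the linear Mahler operator
`L = Σ_k ℓ_k M^k` on a Hahn series `y`. -/
def mahlerApply {K : Type*} [Field K] (b r : ℕ) (ℓ : Fin (r + 1) → K[X])
    (y : HahnSeries ℚ K) : HahnSeries ℚ K :=
  ∑ k : Fin (r + 1), polyToHahn (ℓ k) * (mahlerHahn b)^[(k : ℕ)] y

lemma coeff_sum' {K : Type*} [Field K] {ι : Type*} (s : Finset ι)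
    (f : ι → HahnSeries ℚ K) (q : ℚ) :
    (∑ i ∈ s, f i).coeff q = ∑ i ∈ s, (f i).coeff q := by
  classical
  induction s using Finset.cons_induction with
  | empty => simp
  | cons a s ha ih =>
      rw [Finset.sum_cons, Finset.sum_cons, HahnSeries.coeff_add, ih]

lemma polyToHahn_coeff_nat {K : Type*} [Field K] (p : K[X]) (n : ℕ) :
    (polyToHahn p).coeff (n : ℚ) = p.coeff n := by
  rw [polyToHahn, coeff_sum']
  simp only [HahnSeries.coeff_single, Nat.cast_inj]
  rw [Finset.sum_ite_eq (Finset.range (p.natDegree + 1)) n p.coeff]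
  split_ifs with h
  · rfl
  · rw [Finset.mem_range, not_lt] at h
    exact (p.coeff_eq_zero_of_natDegree_lt (by omega)).symm

lemma polyToHahn_coeff_lt {K : Type*} [Field K] (p : K[X]) (q : ℚ)
    (hq : q < (p.natTrailingDegree : ℚ)) : (polyToHahn p).coeff q = 0 := by
  rw [polyToHahn, coeff_sum']
  refine Finset.sum_eq_zero fun i _ => ?_
  rw [HahnSeries.coeff_single]
  split_ifs with h
  · subst h
    exact p.coeff_eq_zero_of_lt_natTrailingDegree (by exact_mod_cast hq)
  · rfl

lemma polyToHahn_ne_zero {K : Type*} [Field K] {p : K[X]} (hp : p ≠ 0) :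
    polyToHahn p ≠ 0 := by
  intro h
  have := polyToHahn_coeff_nat p p.natTrailingDegree
  rw [h] at this
  simp only [HahnSeries.coeff_zero] at this
  exact trailingCoeff_nonzero_iff_nonzero.mpr hp this.symm

lemma polyToHahn_order {K : Type*} [Field K] {p : K[X]} (hp : p ≠ 0) :
    (polyToHahn p).order = (p.natTrailingDegree : ℚ) := by
  apply le_antisymm
  · apply HahnSeries.order_le_of_coeff_ne_zero
    rw [polyToHahn_coeff_nat]
    exact trailingCoeff_nonzero_iff_nonzero.mpr hp
  · by_contra h
    push_neg at h
    exact (mt HahnSeries.coeff_order_eq_zero.mp (polyToHahn_ne_zero hp))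
      (polyToHahn_coeff_lt p _ h)

lemma mahlerHahn_coeff {K : Type*} [Field K] {b : ℕ} (hb : 0 < b)
    (y : HahnSeries ℚ K) (q : ℚ) :
    (mahlerHahn b y).coeff ((b : ℚ) * q) = y.coeff q := by
  rw [mahlerHahn, dif_pos hb]
  exact HahnSeries.embDomain_coeff

lemma mahlerHahn_coeff_zero {K : Type*} [Field K] {b : ℕ} (hb : 0 < b)
    (y : HahnSeries ℚ K) (q : ℚ) (h : ∀ a : ℚ, (b : ℚ) * a = q → y.coeff a = 0) :
    (mahlerHahn b y).coeff q = 0 := by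
  rw [mahlerHahn, dif_pos hb]
  by_cases hq : q ∈ Set.range (fun a : ℚ => (b : ℚ) * a)
  · obtain ⟨a, ha⟩ := hq
    have : q = (OrderEmbedding.ofStrictMono (fun q : ℚ => (b : ℚ) * q)
        (fun _ _ h => by
          have hb' : (0 : ℚ) < b := by exact_mod_cast hb
          exact mul_lt_mul_of_pos_left h hb')) a := ha.symm
    rw [this, HahnSeries.embDomain_coeff]
    exact h a ha
  · exact HahnSeries.embDomain_notin_range hq

lemma mahlerHahn_ne_zero {K : Type*} [Field K] {b : ℕ} (hb : 0 < b)
    {y : HahnSeries ℚ K} (hy : y ≠ 0) : mahlerHahn b y ≠ 0 := by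
  intro h
  have := mahlerHahn_coeff hb y y.order
  rw [h, HahnSeries.coeff_zero] at this
  exact (mt HahnSeries.coeff_order_eq_zero.mp hy) this.symm

lemma mahlerHahn_order {K : Type*} [Field K] {b : ℕ} (hb : 0 < b)
    {y : HahnSeries ℚ K} (hy : y ≠ 0) :
    (mahlerHahn b y).order = (b : ℚ) * y.order := by
  have hb' : (0 : ℚ) < b := by exact_mod_cast hb
  apply le_antisymm
  · apply HahnSeries.order_le_of_coeff_ne_zero
    rw [mahlerHahn_coeff hb]
    exact (mt HahnSeries.coeff_order_eq_zero.mp hy)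
  · by_contra h
    push_neg at h
    refine (mt HahnSeries.coeff_order_eq_zero.mp (mahlerHahn_ne_zero hb hy)) ?_
    apply mahlerHahn_coeff_zero hb
    intro a ha
    apply HahnSeries.coeff_eq_zero_of_lt_order
    rw [← mul_lt_mul_iff_right₀ hb', ha]
    exact h

lemma mahlerHahn_iter {K : Type*} [Field K] {b : ℕ} (hb : 0 < b)
    {y : HahnSeries ℚ K} (hy : y ≠ 0) (k : ℕ) :
    (mahlerHahn b)^[k] y ≠ 0 ∧
      ((mahlerHahn b)^[k] y).order = (b : ℚ) ^ k * y.order := by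
  induction k with
  | zero => exact ⟨hy, by simp⟩
  | succ k ih =>
    rw [Function.iterate_succ_apply']
    refine ⟨mahlerHahn_ne_zero hb ih.1, ?_⟩
    rw [mahlerHahn_order hb ih.1, ih.2, pow_succ]
    ring

lemma polyToHahn_zero {K : Type*} [Field K] : polyToHahn (0 : K[X]) = 0 := by
  simp [polyToHahn]

lemma key_lemma {K : Type*} [Field K] (b r : ℕ) (hb : 0 < b)
    (ℓ : Fin (r + 1) → K[X]) (y : HahnSeries ℚ K) (hy : y ≠ 0)
    (hsol : mahlerApply b r ℓ y = 0) (k₀ : Fin (r + 1)) (hk₀ : ℓ k₀ ≠ 0)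
    (hmin : ∀ k : Fin (r + 1), k ≠ k₀ → ℓ k ≠ 0 →
      ((ℓ k₀).natTrailingDegree : ℚ) + (b : ℚ) ^ (k₀ : ℕ) * y.order <
        ((ℓ k).natTrailingDegree : ℚ) + (b : ℚ) ^ (k : ℕ) * y.order) : False := by
  classical
  set T : Fin (r + 1) → HahnSeries ℚ K :=
    fun k => polyToHahn (ℓ k) * (mahlerHahn b)^[(k : ℕ)] y with hT
  have hord : ∀ k : Fin (r + 1), ℓ k ≠ 0 → T k ≠ 0 ∧
      (T k).order = ((ℓ k).natTrailingDegree : ℚ) + (b : ℚ) ^ (k : ℕ) * y.order := by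
    intro k hk
    obtain ⟨hne, hor⟩ := mahlerHahn_iter hb hy (k : ℕ)
    refine ⟨mul_ne_zero (polyToHahn_ne_zero hk) hne, ?_⟩
    rw [hT, HahnSeries.order_mul (polyToHahn_ne_zero hk) hne, polyToHahn_order hk, hor]
  set q₀ : ℚ := ((ℓ k₀).natTrailingDegree : ℚ) + (b : ℚ) ^ (k₀ : ℕ) * y.order with hq₀
  have hc : (mahlerApply b r ℓ y).coeff q₀ = (T k₀).coeff q₀ := by
    rw [mahlerApply, coeff_sum']
    refine Finset.sum_eq_single k₀ (fun k _ hk => ?_) (fun h => absurd (Finset.mem_univ k₀) h)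
    by_cases hℓ : ℓ k = 0
    · show (T k).coeff q₀ = 0
      rw [hT]
      simp [hℓ, polyToHahn_zero]
    · exact HahnSeries.coeff_eq_zero_of_lt_order
        (by rw [(hord k hℓ).2]; exact hmin k hk hℓ)
  rw [hsol, HahnSeries.coeff_zero] at hc
  have h0 : (T k₀).coeff q₀ ≠ 0 := by
    rw [hq₀, ← (hord k₀ hk₀).2]
    exact (mt HahnSeries.coeff_order_eq_zero.mp (hord k₀ hk₀).1)
  exact h0 hc.symm

theorem stmt_10 {K : Type*} [Field K] (b r : ℕ) (hb : 2 ≤ b) (hr : 0 < r)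
    (ℓ : Fin (r + 1) → K[X]) (hl0 : ℓ 0 ≠ 0) (hlr : ℓ (Fin.last r) ≠ 0)
    (y : HahnSeries ℚ K) (hy : y ≠ 0) (hP : IsPuiseux y)
    (hsol : mahlerApply b r ℓ y = 0) :
    -(((ℓ (Fin.last r)).natTrailingDegree : ℚ)) / ((b : ℚ) ^ (r - 1) * ((b : ℚ) - 1))
        ≤ y.order ∧
      y.order ≤ ((ℓ 0).natTrailingDegree : ℚ) / ((b : ℚ) - 1) := by
  have hb0 : 0 < b := by omega
  have hbQ : (2 : ℚ) ≤ (b : ℚ) := by exact_mod_cast hb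
  have hb1 : (0 : ℚ) < (b : ℚ) - 1 := by linarith
  have hbr : (b : ℚ) ^ r = (b : ℚ) ^ (r - 1) * (b : ℚ) := by
    have h1 : r - 1 + 1 = r := by omega
    conv_lhs => rw [← h1]
    rw [pow_succ]
  set v : ℚ := y.order with hv
  constructor
  · -- lower bound
    by_contra h
    push_neg at h
    have hD : (0 : ℚ) < (b : ℚ) ^ (r - 1) * ((b : ℚ) - 1) :=
      mul_pos (pow_pos (by linarith) _) hb1
    have hA : v * ((b : ℚ) ^ (r - 1) * ((b : ℚ) - 1)) <
        -((ℓ (Fin.last r)).natTrailingDegree : ℚ) := (lt_div_iff₀ hD).mp h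
    have hvr0 : (0 : ℚ) ≤ ((ℓ (Fin.last r)).natTrailingDegree : ℚ) := Nat.cast_nonneg _
    have hvneg : v < 0 := by nlinarith
    refine key_lemma b r hb0 ℓ y hy hsol (Fin.last r) hlr (fun k hk hℓ => ?_)
    have hkr : (k : ℕ) ≤ r - 1 := by
      have := k.isLt
      have hne : (k : ℕ) ≠ r := fun hc => hk (Fin.ext (by simp [hc]))
      omega
    have hpk : (b : ℚ) ^ (k : ℕ) ≤ (b : ℚ) ^ (r - 1) :=
      pow_le_pow_right₀ (by linarith) hkr
    have f1 : (b : ℚ) ^ (r - 1) * v ≤ (b : ℚ) ^ (k : ℕ) * v :=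
      mul_le_mul_of_nonpos_right hpk hvneg.le
    have hvk0 : (0 : ℚ) ≤ ((ℓ k).natTrailingDegree : ℚ) := Nat.cast_nonneg _
    have hlast : ((Fin.last r : Fin (r + 1)) : ℕ) = r := rfl
    rw [hlast]
    nlinarith [hA, f1, hvk0, hbr]
  · -- upper bound
    by_contra h
    push_neg at h
    have hA : ((ℓ 0).natTrailingDegree : ℚ) < ((b : ℚ) - 1) * v := by
      rw [div_lt_iff₀ hb1] at h
      linarith
    have hv00 : (0 : ℚ) ≤ ((ℓ 0).natTrailingDegree : ℚ) := Nat.cast_nonneg _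
    have hvpos : 0 < v := by nlinarith
    refine key_lemma b r hb0 ℓ y hy hsol 0 hl0 (fun k hk hℓ => ?_)
    have hk1 : 1 ≤ (k : ℕ) := by
      rcases Nat.eq_zero_or_pos (k : ℕ) with h0 | h0
      · exact absurd (Fin.ext (by simp [h0])) hk
      · exact h0
    have hpk : (b : ℚ) ≤ (b : ℚ) ^ (k : ℕ) := by
      calc (b : ℚ) = (b : ℚ) ^ 1 := (pow_one _).symm
        _ ≤ (b : ℚ) ^ (k : ℕ) := pow_le_pow_right₀ (by linarith) hk1
    have hvk0 : (0 : ℚ) ≤ ((ℓ k).natTrailingDegree : ℚ) := Nat.cast_nonneg _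
    have h0v : ((0 : Fin (r + 1)) : ℕ) = 0 := rfl
    rw [h0v, pow_zero, one_mul]
    nlinarith [mul_nonneg (sub_nonneg.mpr hpk) hvpos.le]
end
end

section
/- Let b ≥ 2 and L = ℓ_r M^r + ⋯ + ℓ_0 with ℓ_0 ℓ_r ≠ 0, and let d_k = deg ℓ_k with d = max_k d_k. If p ∈ K[x] is a nonzero polynomial solution of L p = 0, then deg p ≤ d/(b^{r−1}(b−1)). -/
open Polynomial

theorem stmt_12 {K : Type*} [Field K] (b r d : ℕ) (hb : 2 ≤ b) (hr : 0 < r)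
    (ℓ : Fin (r + 1) → K[X]) (hl0 : ℓ 0 ≠ 0) (hlr : ℓ (Fin.last r) ≠ 0)
    (hd : d = Finset.univ.sup fun k => (ℓ k).natDegree)
    (p : K[X]) (hp : p ≠ 0)
    (hsol : ∑ k : Fin (r + 1), ℓ k * p.comp (X ^ b ^ (k : ℕ)) = 0) :
    (p.natDegree : ℚ) ≤ (d : ℚ) / ((b : ℚ) ^ (r - 1) * ((b : ℚ) - 1)) := by
  set n := p.natDegree with hn
  have hb0 : 0 < b := by omega
  -- comp with X^m is nonzero
  have hcomp : ∀ m : ℕ, p.comp (X ^ b ^ m) ≠ 0 := by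
    intro m h
    have h2 : (p.comp (X ^ b ^ m)).coeff (n * b ^ m) = p.leadingCoeff := by
      have := Polynomial.coeff_comp_degree_mul_degree (p := p) (q := X ^ b ^ m)
        (by rw [natDegree_X_pow]; positivity)
      simpa [natDegree_X_pow, leadingCoeff_X_pow] using this
    rw [h] at h2
    simp only [coeff_zero] at h2
    exact hp (leadingCoeff_eq_zero.mp h2.symm)
  -- split off last term
  rw [Fin.sum_univ_castSucc] at hsol
  have key : ℓ (Fin.last r) * p.comp (X ^ b ^ r) =
      -∑ k : Fin r, ℓ k.castSucc * p.comp (X ^ b ^ (k : ℕ)) := by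
    have := eq_neg_of_add_eq_zero_right hsol
    simpa [Fin.val_last] using this
  -- degree of the last term
  have hdegL : (ℓ (Fin.last r) * p.comp (X ^ b ^ r)).natDegree
      = (ℓ (Fin.last r)).natDegree + n * b ^ r := by
    rw [natDegree_mul hlr (hcomp r), natDegree_comp, natDegree_X_pow]
  -- bound on degree of the rest
  have hdegR : (∑ k : Fin r, ℓ k.castSucc * p.comp (X ^ b ^ (k : ℕ))).natDegree
      ≤ d + n * b ^ (r - 1) := by
    apply Polynomial.natDegree_sum_le_of_forall_le
    intro k _
    calc (ℓ k.castSucc * p.comp (X ^ b ^ (k : ℕ))).natDegree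
        ≤ (ℓ k.castSucc).natDegree + (p.comp (X ^ b ^ (k : ℕ))).natDegree :=
          natDegree_mul_le
      _ ≤ d + n * b ^ (r - 1) := by
          gcongr
          · rw [hd]; exact Finset.le_sup (f := fun k => (ℓ k).natDegree) (Finset.mem_univ _)
          · rw [natDegree_comp, natDegree_X_pow]
            gcongr
            · omega
  have hmain : n * b ^ r ≤ d + n * b ^ (r - 1) := by
    have h1 : (ℓ (Fin.last r)).natDegree + n * b ^ r ≤ d + n * b ^ (r - 1) := by
      rw [← hdegL, key, natDegree_neg]; exact hdegR
    omega
  -- pass to ℚ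
  have hbr : (b : ℚ) ^ r = (b : ℚ) ^ (r - 1) * b := by
    rw [← pow_succ]; congr 1; omega
  have hQ : (n : ℚ) * (b : ℚ) ^ r ≤ (d : ℚ) + (n : ℚ) * (b : ℚ) ^ (r - 1) := by
    exact_mod_cast hmain
  have hbQ : (2 : ℚ) ≤ (b : ℚ) := by exact_mod_cast hb
  have hb1 : (0:ℚ) < (b : ℚ) - 1 := by linarith
  have hpos : 0 < (b : ℚ) ^ (r - 1) * ((b : ℚ) - 1) := by positivity
  rw [le_div_iff₀ hpos]
  nlinarith [hQ, hbr]
end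

section
/- Let b ≥ 2 and let L = ℓ_r M^r + ⋯ + ℓ_0 with d = max_k deg ℓ_k. Suppose p, q ∈ K[x] with q ≠ 0 satisfy L(p/q) = 0 in K(x). Then deg p ≤ deg q + ⌊d/(b^r − b^{r−1})⌋. -/
open Polynomial

set_option maxHeartbeats 1000000 in
theorem stmt_13 {K : Type*} [Field K] (b r d : ℕ) (hb : 2 ≤ b) (hr : 0 < r)
    (ℓ : Fin (r + 1) → K[X]) (hl0 : ℓ 0 ≠ 0) (hlr : ℓ (Fin.last r) ≠ 0)
    (hd : d = Finset.univ.sup fun k => (ℓ k).natDegree)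
    (p q : K[X]) (hq : q ≠ 0)
    (hsol : ∑ k : Fin (r + 1),
        algebraMap K[X] (RatFunc K) (ℓ k) *
          (algebraMap K[X] (RatFunc K) (p.comp (X ^ b ^ (k : ℕ))) /
            algebraMap K[X] (RatFunc K) (q.comp (X ^ b ^ (k : ℕ)))) = 0) :
    p.natDegree ≤ q.natDegree + d / (b ^ r - b ^ (r - 1)) := by
  rcases eq_or_ne p 0 with rfl | hp
  · simp
  by_contra hcon
  push_neg at hcon
  set P := p.natDegree with hP
  set Q := q.natDegree with hQ
  have hbpos : 0 < b := by omega
  have hble : b ^ (r - 1) ≤ b ^ r := Nat.pow_le_pow_right (by omega) (by omega)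
  have hmlt : b ^ (r - 1) < b ^ r :=
    Nat.pow_lt_pow_right (by omega) (by omega)
  set m := b ^ r - b ^ (r - 1) with hmdef
  have hm : 0 < m := by omega
  have hQP : Q < P := Nat.lt_of_le_of_lt (Nat.le_add_right Q (d / m)) hcon
  -- key numeric inequality
  have hkey : m * Q + d < m * P := by
    have h1 : Q + d / m + 1 ≤ P := hcon
    have hdm := Nat.div_add_mod d m
    have hmod : d % m < m := Nat.mod_lt d hm
    calc m * Q + d < m * Q + m * (d / m) + m := by omega
      _ = m * (Q + d / m + 1) := by ring
      _ ≤ m * P := Nat.mul_le_mul_left m h1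
  -- nonzeroness of compositions
  have hcompne : ∀ (f : K[X]), f ≠ 0 → ∀ n : ℕ, 0 < n → f.comp (X ^ n) ≠ 0 := by
    intro f hf n hn h0
    have hdeg : ((X : K[X]) ^ n).natDegree ≠ 0 := by
      simp [natDegree_X_pow]; omega
    have h := leadingCoeff_comp (p := f) (q := (X : K[X]) ^ n) hdeg
    rw [h0] at h
    simp [leadingCoeff_X_pow] at h
    exact hf (leadingCoeff_eq_zero.mp h.symm)
  set A : Fin (r + 1) → K[X] := fun j => q.comp (X ^ b ^ (j : ℕ)) with hA
  have hAne : ∀ j, A j ≠ 0 := fun j => hcompne q hq _ (Nat.pow_pos hbpos)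
  have hPcne : ∀ j : Fin (r + 1), p.comp (X ^ b ^ (j : ℕ)) ≠ 0 :=
    fun j => hcompne p hp _ (Nat.pow_pos hbpos)
  set f : Fin (r + 1) → K[X] :=
    fun k => ℓ k * p.comp (X ^ b ^ (k : ℕ)) * ∏ j ∈ Finset.univ.erase k, A j with hf
  set φ := algebraMap K[X] (RatFunc K) with hφ
  have hφinj : Function.Injective φ := RatFunc.algebraMap_injective K
  -- polynomial identity
  have hpoly : ∑ k : Fin (r + 1), f k = 0 := by
    apply hφinj
    rw [map_sum, map_zero]
    have h2 := congrArg (· * ∏ j : Fin (r + 1), φ (A j)) hsol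
    simp only [zero_mul, Finset.sum_mul] at h2
    rw [← h2]
    apply Finset.sum_congr rfl
    intro k _
    have hAk : φ (A k) ≠ 0 := fun h =>
      hAne k (hφinj (by rw [h, map_zero]))
    rw [← Finset.mul_prod_erase Finset.univ (fun j => φ (A j)) (Finset.mem_univ k)]
    simp only [hf, map_mul, map_prod]
    field_simp
    exact (mul_div_cancel_right₀ _ hAk).symm
  -- degrees
  have hAdeg : ∀ j : Fin (r + 1), (A j).natDegree = Q * b ^ (j : ℕ) := by
    intro j
    simp [hA, natDegree_comp, natDegree_X_pow, hQ]
  have hPcdeg : ∀ j : Fin (r + 1), (p.comp (X ^ b ^ (j : ℕ))).natDegree = P * b ^ (j : ℕ) := by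
    intro j
    simp [natDegree_comp, natDegree_X_pow, hP]
  set D := (f (Fin.last r)).natDegree with hD
  have hflastne : f (Fin.last r) ≠ 0 :=
    mul_ne_zero (mul_ne_zero hlr (hPcne _))
      (Finset.prod_ne_zero_iff.mpr fun j _ => hAne j)
  have hDval : D = (ℓ (Fin.last r)).natDegree + P * b ^ r +
      ∑ j ∈ Finset.univ.erase (Fin.last r), Q * b ^ (j : ℕ) := by
    rw [hD, hf]
    rw [natDegree_mul (mul_ne_zero hlr (hPcne _))
      (Finset.prod_ne_zero_iff.mpr fun j _ => hAne j),
      natDegree_mul hlr (hPcne _),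
      natDegree_prod _ _ (fun j _ => hAne j), hPcdeg (Fin.last r)]
    simp only [Fin.val_last]
    congr 1
    exact Finset.sum_congr rfl fun j _ => hAdeg j
  -- strict domination
  have hup : ∀ k ∈ Finset.univ.erase (Fin.last r), (f k).natDegree < D := by
    intro k hk
    have hklt : (k : ℕ) < r := by
      have := (Finset.mem_erase.mp hk).1
      have hkr : (k : ℕ) ≤ r := Nat.lt_succ_iff.mp k.isLt
      rcases Nat.lt_or_ge (k : ℕ) r with h | h
      · exact h
      · exact absurd (Fin.ext (by simp [Fin.val_last]; omega)) this
    have hub : (f k).natDegree ≤ (ℓ k).natDegree + P * b ^ (k : ℕ) +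
        ∑ j ∈ Finset.univ.erase k, Q * b ^ (j : ℕ) := by
      calc (f k).natDegree ≤ (ℓ k * p.comp (X ^ b ^ (k : ℕ))).natDegree +
            (∏ j ∈ Finset.univ.erase k, A j).natDegree := natDegree_mul_le
        _ ≤ (ℓ k).natDegree + (p.comp (X ^ b ^ (k : ℕ))).natDegree +
            ∑ j ∈ Finset.univ.erase k, (A j).natDegree :=
          Nat.add_le_add natDegree_mul_le (natDegree_prod_le _ _)
        _ = (ℓ k).natDegree + P * b ^ (k : ℕ) +
            ∑ j ∈ Finset.univ.erase k, Q * b ^ (j : ℕ) := by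
          rw [hPcdeg]
          congr 1
          exact Finset.sum_congr rfl fun j _ => hAdeg j
    have hld : (ℓ k).natDegree ≤ d := by
      rw [hd]
      exact Finset.le_sup (f := fun k => (ℓ k).natDegree) (Finset.mem_univ k)
    -- core numeric inequality
    have hce : b ^ (k : ℕ) ≤ b ^ (r - 1) := Nat.pow_le_pow_right (by omega) (by omega)
    have hcore : d + P * b ^ (k : ℕ) + Q * b ^ r < P * b ^ r + Q * b ^ (k : ℕ) := by
      obtain ⟨t, ht⟩ : ∃ t, b ^ (r - 1) = b ^ (k : ℕ) + t := ⟨b ^ (r - 1) - b ^ (k : ℕ), by omega⟩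
      obtain ⟨s, hs⟩ : ∃ s, P = Q + s ∧ 0 < s := ⟨P - Q, by omega⟩
      obtain ⟨hs1, hs2⟩ := hs
      have hB : b ^ r = b ^ (k : ℕ) + t + m := by omega
      rw [hB, hs1]
      have hkey' : m * Q + d < m * (Q + s) := by rw [← hs1]; exact hkey
      nlinarith
    -- sums over erased sets
    have hsum1 : (∑ j ∈ Finset.univ.erase k, Q * b ^ (j : ℕ)) + Q * b ^ (k : ℕ) =
        ∑ j : Fin (r + 1), Q * b ^ (j : ℕ) := by
      rw [add_comm]
      exact Finset.add_sum_erase Finset.univ (fun j : Fin (r + 1) => Q * b ^ (j : ℕ))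
        (Finset.mem_univ k)
    have hsum2 : (∑ j ∈ Finset.univ.erase (Fin.last r), Q * b ^ (j : ℕ)) + Q * b ^ r =
        ∑ j : Fin (r + 1), Q * b ^ (j : ℕ) := by
      rw [add_comm]
      have := Finset.add_sum_erase Finset.univ (fun j : Fin (r + 1) => Q * b ^ (j : ℕ))
        (Finset.mem_univ (Fin.last r))
      simpa [Fin.val_last] using this
    have hld' : d ≤ (ℓ (Fin.last r)).natDegree + d := by omega
    rw [hDval]
    omega
  -- finish
  have h0mem : (0 : Fin (r + 1)) ∈ Finset.univ.erase (Fin.last r) := by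
    refine Finset.mem_erase.mpr ⟨?_, Finset.mem_univ _⟩
    intro h
    have : (0 : Fin (r + 1)).val = (Fin.last r).val := by rw [h]
    simp [Fin.val_last] at this
    omega
  have hD1 : 1 ≤ D := by
    have := hup 0 h0mem
    omega
  have hflast : f (Fin.last r) = -∑ k ∈ Finset.univ.erase (Fin.last r), f k := by
    have h := Finset.add_sum_erase Finset.univ f (Finset.mem_univ (Fin.last r))
    rw [hpoly] at h
    exact eq_neg_of_add_eq_zero_left h
  have hsumle : (∑ k ∈ Finset.univ.erase (Fin.last r), f k).natDegree ≤ D - 1 :=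
    natDegree_sum_le_of_forall_le _ _ fun k hk => by have := hup k hk; omega
  have hfin : D ≤ D - 1 :=
    le_trans (le_of_eq (by rw [hD, hflast, natDegree_neg])) hsumle
  omega
end

section
/- Let b ≥ 2 and L = ℓ_r M^r + ⋯ + ℓ_0 with ℓ_0 ℓ_r ≠ 0 and d = max_k deg ℓ_k. If d < b^{r−1}, then every rational function solution y ∈ K(x) of L y = 0 is a constant. -/
open Polynomial

private lemma aux_comp_ne_zero {K : Type*} [Field K] {A : K[X]} (hA : A ≠ 0)
    {N : ℕ} (hN : 1 ≤ N) : A.comp (X ^ N) ≠ 0 := by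
  intro h
  rcases Polynomial.comp_eq_zero_iff.mp h with h1 | ⟨_, h2⟩
  · exact hA h1
  · have h3 := congrArg Polynomial.natDegree h2
    rw [Polynomial.natDegree_X_pow, Polynomial.natDegree_C] at h3
    omega

private lemma aux_exists_X_pow_mul {K : Type*} [Field K] {A : K[X]} (hA : A ≠ 0) :
    ∃ t B, A = X ^ t * B ∧ B.eval 0 ≠ 0 := by
  obtain ⟨B, hB, hnd⟩ := A.exists_eq_pow_rootMultiplicity_mul_and_not_dvd hA 0
  refine ⟨_, B, by simpa using hB, fun h0 => hnd ?_⟩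
  have : (X : K[X]) ∣ B := Polynomial.X_dvd_iff.mpr
    (by rwa [Polynomial.coeff_zero_eq_eval_zero])
  simpa using this

private lemma aux_le_of_X_pow_dvd {K : Type*} [Field K] {s t : ℕ} {W : K[X]}
    (hW : W.eval 0 ≠ 0) (h : (X : K[X]) ^ s ∣ X ^ t * W) : s ≤ t := by
  by_contra hst
  push_neg at hst
  have h1 : (X : K[X]) ^ (t + 1) ∣ X ^ t * W :=
    dvd_trans (pow_dvd_pow _ (by omega)) h
  rw [pow_succ] at h1
  have hX : (X : K[X]) ^ t ≠ 0 := pow_ne_zero _ Polynomial.X_ne_zero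
  have h2 : (X : K[X]) ∣ W := (mul_dvd_mul_iff_left hX).mp h1
  rw [Polynomial.X_dvd_iff, Polynomial.coeff_zero_eq_eval_zero] at h2
  exact hW h2

private lemma aux_card_rootSet {F : Type*} [Field F] [IsAlgClosed F] [CharZero F]
    [DecidableEq F] {δ : F} (hδ : δ ≠ 0) {n : ℕ} (hn : 0 < n) :
    ((X ^ n - C δ).roots.toFinset.card = n) := by
  have hsep : ((X : F[X]) ^ n - C δ).Separable :=
    Polynomial.separable_X_pow_sub_C δ (Nat.cast_ne_zero.mpr hn.ne') hδ
  rw [Multiset.toFinset_card_of_nodup (Polynomial.nodup_roots hsep)]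
  have hcard := (Polynomial.splits_iff_card_roots).mp
    (IsAlgClosed.splits ((X : F[X]) ^ n - C δ))
  rw [hcard, Polynomial.natDegree_X_pow_sub_C]

private lemma aux_mem_rootSet {F : Type*} [Field F] [DecidableEq F] {δ : F} {n : ℕ} (hn : 0 < n)
    {β : F} (hβ : β ∈ ((X : F[X]) ^ n - C δ).roots.toFinset) : β ^ n = δ := by
  rw [Multiset.mem_toFinset,
    Polynomial.mem_roots (Polynomial.X_pow_sub_C_ne_zero hn δ)] at hβ
  simpa [Polynomial.IsRoot, sub_eq_zero] using hβ

private lemma aux_coprime_pow_sub_one {b E : ℕ} (hb : 2 ≤ b) (hE : 1 ≤ E) :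
    Nat.Coprime (b ^ E - 1) b := by
  have h1 : Nat.Coprime (b ^ E - 1) (b ^ E) := by
    obtain ⟨m, hm⟩ : ∃ m, b ^ E = m + 1 :=
      ⟨b ^ E - 1, (Nat.sub_add_cancel (Nat.one_le_pow _ _ (by omega))).symm⟩
    rw [hm, Nat.add_sub_cancel]
    simp
  exact h1.coprime_dvd_right (dvd_pow_self b (by omega))

theorem stmt_14 {K : Type*} [Field K] [CharZero K] (b r d : ℕ) (hb : 2 ≤ b) (hr : 0 < r)
    (ℓ : Fin (r + 1) → K[X]) (hl0 : ℓ 0 ≠ 0) (hlr : ℓ (Fin.last r) ≠ 0)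
    (hd : d = Finset.univ.sup fun k => (ℓ k).natDegree)
    (hsmall : d < b ^ (r - 1))
    (y : RatFunc K)
    (hsol : ∑ k : Fin (r + 1),
        algebraMap K[X] (RatFunc K) (ℓ k) *
          (algebraMap K[X] (RatFunc K) (y.num.comp (X ^ b ^ (k : ℕ))) /
            algebraMap K[X] (RatFunc K) (y.denom.comp (X ^ b ^ (k : ℕ)))) = 0) :
    ∃ c : K, y = RatFunc.C c := by
  classical
  by_cases hy : y = 0
  · exact ⟨0, by simp [hy]⟩
  set P : K[X] := y.num with hPdef
  set Q : K[X] := y.denom with hQdef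
  have hP : P ≠ 0 := RatFunc.num_ne_zero hy
  have hQ : Q ≠ 0 := y.denom_ne_zero
  have hcop : IsCoprime P Q := y.isCoprime_num_denom
  have hdk : ∀ k : Fin (r + 1), (ℓ k).natDegree ≤ d := by
    intro k
    rw [hd]
    exact Finset.le_sup (f := fun k => (ℓ k).natDegree) (Finset.mem_univ k)
  have hbpow : ∀ k : ℕ, 1 ≤ b ^ k := fun k => Nat.one_le_pow _ _ (by omega)
  -- Step A : clear denominators, get a polynomial identity
  have hinj : Function.Injective (algebraMap K[X] (RatFunc K)) :=
    IsFractionRing.injective K[X] (RatFunc K)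
  have hQkne : ∀ k : Fin (r + 1),
      (algebraMap K[X] (RatFunc K)) (Q.comp (X ^ b ^ (k : ℕ))) ≠ 0 := by
    intro k h
    have : Q.comp (X ^ b ^ (k : ℕ)) = 0 := hinj (by rw [h, map_zero])
    exact aux_comp_ne_zero hQ (hbpow _) this
  have hpoly : (∑ k : Fin (r + 1), ℓ k * P.comp (X ^ b ^ (k : ℕ)) *
      ∏ j ∈ Finset.univ.erase k, Q.comp (X ^ b ^ (j : ℕ))) = 0 := by
    apply hinj
    rw [map_zero, map_sum]
    have key : ∀ k : Fin (r + 1),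
        (algebraMap K[X] (RatFunc K)) (ℓ k * P.comp (X ^ b ^ (k : ℕ)) *
          ∏ j ∈ Finset.univ.erase k, Q.comp (X ^ b ^ (j : ℕ)))
        = (algebraMap K[X] (RatFunc K) (ℓ k) *
            (algebraMap K[X] (RatFunc K) (P.comp (X ^ b ^ (k : ℕ))) /
              algebraMap K[X] (RatFunc K) (Q.comp (X ^ b ^ (k : ℕ))))) *
          (algebraMap K[X] (RatFunc K)) (∏ j : Fin (r + 1), Q.comp (X ^ b ^ (j : ℕ))) := by
      intro k
      have hsplit : (∏ j : Fin (r + 1), Q.comp (X ^ b ^ (j : ℕ)))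
          = Q.comp (X ^ b ^ (k : ℕ)) *
            ∏ j ∈ Finset.univ.erase k, Q.comp (X ^ b ^ (j : ℕ)) :=
        (Finset.mul_prod_erase _ _ (Finset.mem_univ k)).symm
      rw [hsplit, map_mul, map_mul, map_mul]
      field_simp [hQkne k]
    calc (∑ k : Fin (r + 1), (algebraMap K[X] (RatFunc K))
            (ℓ k * P.comp (X ^ b ^ (k : ℕ)) *
              ∏ j ∈ Finset.univ.erase k, Q.comp (X ^ b ^ (j : ℕ))))
        = (∑ k : Fin (r + 1),
            algebraMap K[X] (RatFunc K) (ℓ k) *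
              (algebraMap K[X] (RatFunc K) (P.comp (X ^ b ^ (k : ℕ))) /
                algebraMap K[X] (RatFunc K) (Q.comp (X ^ b ^ (k : ℕ))))) *
          (algebraMap K[X] (RatFunc K)) (∏ j : Fin (r + 1), Q.comp (X ^ b ^ (j : ℕ))) := by
          rw [Finset.sum_mul]
          exact Finset.sum_congr rfl fun k _ => key k
      _ = 0 := by rw [hsol, zero_mul]
  -- Step B : Q has no root at 0
  have hQ0 : Q.eval 0 ≠ 0 := by
    intro h0
    have hP0 : P.eval 0 ≠ 0 := by
      intro hP0
      obtain ⟨u1, u2, hu⟩ := hcop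
      have := congrArg (Polynomial.eval 0) hu
      simp [hP0, h0] at this
    obtain ⟨v, Q', hQ'eq, hQ'0⟩ := aux_exists_X_pow_mul hQ
    have hv : 1 ≤ v := by
      rcases Nat.eq_zero_or_pos v with h | h
      · exact absurd (by rw [hQ'eq, h, pow_zero, one_mul] at h0; exact h0) hQ'0
      · exact h
    obtain ⟨u, L', hLeq, hL0⟩ := aux_exists_X_pow_mul hlr
    have hL'ne : L' ≠ 0 := fun h => hL0 (by rw [h, Polynomial.eval_zero])
    have hu : u ≤ d := by
      have h1 : (ℓ (Fin.last r)).natDegree = u + L'.natDegree := by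
        rw [hLeq, Polynomial.natDegree_mul (pow_ne_zero _ Polynomial.X_ne_zero) hL'ne,
          Polynomial.natDegree_X_pow]
      have := hdk (Fin.last r)
      omega
    have hQjdvd : ∀ j : Fin (r + 1),
        (X : K[X]) ^ (b ^ (j : ℕ) * v) ∣ Q.comp (X ^ b ^ (j : ℕ)) := by
      intro j
      rw [hQ'eq, Polynomial.mul_comp, Polynomial.pow_comp, Polynomial.X_comp, ← pow_mul]
      exact dvd_mul_right _ _
    -- the pivot index r-1 inside Fin (r+1)
    set i1 : Fin (r + 1) := ⟨r - 1, by omega⟩ with hi1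
    set s : ℕ := ∑ j ∈ Finset.univ.erase i1, b ^ (j : ℕ) * v with hs
    have hsumsplit : ∀ k : Fin (r + 1),
        (∑ j : Fin (r + 1), b ^ (j : ℕ) * v)
          = b ^ (k : ℕ) * v + ∑ j ∈ Finset.univ.erase k, b ^ (j : ℕ) * v :=
      fun k => (Finset.add_sum_erase _ _ (Finset.mem_univ k)).symm
    have hXs : ∀ k : Fin (r + 1), k ≠ Fin.last r →
        (X : K[X]) ^ s ∣ ℓ k * P.comp (X ^ b ^ (k : ℕ)) *
          ∏ j ∈ Finset.univ.erase k, Q.comp (X ^ b ^ (j : ℕ)) := by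
      intro k hk
      have h1 : (X : K[X]) ^ (∑ j ∈ Finset.univ.erase k, b ^ (j : ℕ) * v)
          ∣ ∏ j ∈ Finset.univ.erase k, Q.comp (X ^ b ^ (j : ℕ)) := by
        rw [← Finset.prod_pow_eq_pow_sum]
        exact Finset.prod_dvd_prod_of_dvd _ _ fun j _ => hQjdvd j
      have h2 : s ≤ ∑ j ∈ Finset.univ.erase k, b ^ (j : ℕ) * v := by
        have e1 := hsumsplit i1
        have e2 := hsumsplit k
        have hkval : (k : ℕ) ≤ r - 1 := by
          have := Fin.val_lt_last hk
          omega
        have hple : b ^ (k : ℕ) * v ≤ b ^ ((i1 : ℕ)) * v := by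
          have : (i1 : ℕ) = r - 1 := rfl
          exact Nat.mul_le_mul_right v (Nat.pow_le_pow_right (by omega) (by omega))
        omega
      exact Dvd.dvd.mul_left ((pow_dvd_pow _ h2).trans h1) _
    have hXlast : (X : K[X]) ^ s ∣ ℓ (Fin.last r) *
        P.comp (X ^ b ^ ((Fin.last r : Fin (r + 1)) : ℕ)) *
        ∏ j ∈ Finset.univ.erase (Fin.last r), Q.comp (X ^ b ^ (j : ℕ)) := by
      have hsp := Finset.add_sum_erase Finset.univ
        (fun k : Fin (r + 1) => ℓ k * P.comp (X ^ b ^ (k : ℕ)) *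
          ∏ j ∈ Finset.univ.erase k, Q.comp (X ^ b ^ (j : ℕ))) (Finset.mem_univ (Fin.last r))
      rw [hpoly] at hsp
      have heq : ℓ (Fin.last r) * P.comp (X ^ b ^ ((Fin.last r : Fin (r + 1)) : ℕ)) *
          ∏ j ∈ Finset.univ.erase (Fin.last r), Q.comp (X ^ b ^ (j : ℕ))
          = -∑ k ∈ Finset.univ.erase (Fin.last r),
              ℓ k * P.comp (X ^ b ^ (k : ℕ)) *
                ∏ j ∈ Finset.univ.erase k, Q.comp (X ^ b ^ (j : ℕ)) := by
        rw [eq_neg_iff_add_eq_zero]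
        exact hsp
      rw [heq]
      apply Dvd.dvd.neg_right
      apply Finset.dvd_sum
      intro k hkmem
      exact hXs k (Finset.mem_erase.mp hkmem).1
    -- decompose the last term
    set A : ℕ := ∑ j ∈ Finset.univ.erase (Fin.last r), b ^ (j : ℕ) * v with hA
    have hterm : ℓ (Fin.last r) * P.comp (X ^ b ^ ((Fin.last r : Fin (r + 1)) : ℕ)) *
        ∏ j ∈ Finset.univ.erase (Fin.last r), Q.comp (X ^ b ^ (j : ℕ))
        = X ^ (u + A) *
          (L' * P.comp (X ^ b ^ ((Fin.last r : Fin (r + 1)) : ℕ)) *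
            ∏ j ∈ Finset.univ.erase (Fin.last r), Q'.comp (X ^ b ^ (j : ℕ))) := by
      have hprod : (∏ j ∈ Finset.univ.erase (Fin.last r), Q.comp (X ^ b ^ (j : ℕ)))
          = X ^ A * ∏ j ∈ Finset.univ.erase (Fin.last r), Q'.comp (X ^ b ^ (j : ℕ)) := by
        have : ∀ j ∈ Finset.univ.erase (Fin.last r),
            Q.comp (X ^ b ^ (j : ℕ))
              = X ^ (b ^ (j : ℕ) * v) * Q'.comp (X ^ b ^ (j : ℕ)) := by
          intro j _
          rw [hQ'eq, Polynomial.mul_comp, Polynomial.pow_comp, Polynomial.X_comp, ← pow_mul]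
        rw [Finset.prod_congr rfl this, Finset.prod_mul_distrib,
          Finset.prod_pow_eq_pow_sum]
      rw [hprod, hLeq]
      ring
    have hW0 : (L' * P.comp (X ^ b ^ ((Fin.last r : Fin (r + 1)) : ℕ)) *
        ∏ j ∈ Finset.univ.erase (Fin.last r), Q'.comp (X ^ b ^ (j : ℕ))).eval 0 ≠ 0 := by
      rw [Polynomial.eval_mul, Polynomial.eval_mul, Polynomial.eval_prod]
      apply mul_ne_zero
      apply mul_ne_zero hL0
      · rw [Polynomial.eval_comp, Polynomial.eval_pow, Polynomial.eval_X,
          zero_pow (by have := hbpow ((Fin.last r : Fin (r + 1)) : ℕ); omega)]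
        exact hP0
      · apply Finset.prod_ne_zero_iff.mpr
        intro j _
        rw [Polynomial.eval_comp, Polynomial.eval_pow, Polynomial.eval_X,
          zero_pow (by have := hbpow ((j : Fin (r + 1)) : ℕ); omega)]
        exact hQ'0
    have hst : s ≤ u + A := by
      apply aux_le_of_X_pow_dvd hW0
      rw [← hterm]
      exact hXlast
    -- numeric contradiction
    have e1 := hsumsplit i1
    have e2 := hsumsplit (Fin.last r)
    have hi1v : ((i1 : Fin (r + 1)) : ℕ) = r - 1 := rfl
    have hlastv : ((Fin.last r : Fin (r + 1)) : ℕ) = r := rfl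
    have hc2 : 2 * (b ^ (r - 1) * v) ≤ b ^ r * v := by
      have hbr : b ^ r = b ^ (r - 1) * b := by
        rw [← pow_succ]
        congr 1
        omega
      calc 2 * (b ^ (r - 1) * v) = b ^ (r - 1) * 2 * v := by ring
        _ ≤ b ^ (r - 1) * b * v := by
            apply Nat.mul_le_mul_right
            apply Nat.mul_le_mul_left
            omega
        _ = b ^ r * v := by rw [hbr]
    have hdc : d < b ^ (r - 1) * v := by
      have : b ^ (r - 1) ≤ b ^ (r - 1) * v := Nat.le_mul_of_pos_right _ (by omega)
      omega
    rw [hi1v] at e1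
    rw [hlastv] at e2
    -- e1 : ∑ = b^(r-1)*v + s ; e2 : ∑ = b^r*v + A ; hst : s ≤ u + A ; hu : u ≤ d
    omega
  -- move to the algebraic closure
  set F := AlgebraicClosure K with hF
  haveI : CharZero F := charZero_of_injective_algebraMap (algebraMap K F).injective
  set Pf : F[X] := P.map (algebraMap K F) with hPfdef
  set Qf : F[X] := Q.map (algebraMap K F) with hQfdef
  set Lf : Fin (r + 1) → F[X] := fun k => (ℓ k).map (algebraMap K F) with hLfdef
  have hPfne : Pf ≠ 0 := Polynomial.map_ne_zero hP
  have hQfne : Qf ≠ 0 := Polynomial.map_ne_zero hQ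
  have hLfrne : Lf (Fin.last r) ≠ 0 := Polynomial.map_ne_zero hlr
  have hcopF : IsCoprime Pf Qf := hcop.map (Polynomial.mapRingHom (algebraMap K F))
  have hQf0 : Qf.eval 0 ≠ 0 := by
    rw [hQfdef, Polynomial.eval_map, Polynomial.eval₂_at_zero]
    intro h
    have h2 : Q.coeff 0 = 0 := (algebraMap K F).injective (by rw [h, map_zero])
    rw [Polynomial.coeff_zero_eq_eval_zero] at h2
    exact hQ0 h2
  have hpolyF : (∑ k : Fin (r + 1), Lf k * Pf.comp (X ^ b ^ (k : ℕ)) *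
      ∏ j ∈ Finset.univ.erase k, Qf.comp (X ^ b ^ (j : ℕ))) = 0 := by
    have h := congrArg (Polynomial.mapRingHom (algebraMap K F)) hpoly
    simp only [map_sum, map_mul, map_prod, Polynomial.coe_mapRingHom, Polynomial.map_comp,
      Polynomial.map_pow, Polynomial.map_X, map_zero] at h
    exact h
  -- the local dichotomy at any b^r-th root of a pole
  have hdich : ∀ δ : F, Qf.eval δ = 0 → ∀ β : F, β ^ b ^ r = δ →
      (Lf (Fin.last r)).eval β = 0 ∨ ∃ j, j < r ∧ Qf.eval (β ^ b ^ j) = 0 := by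
    intro δ hδroot β hβ
    by_contra hcon
    push_neg at hcon
    obtain ⟨hL, hQj⟩ := hcon
    have hPδ : Pf.eval δ ≠ 0 := by
      intro hP0
      obtain ⟨u1, u2, hu⟩ := hcopF
      have := congrArg (Polynomial.eval δ) hu
      simp [hP0, hδroot] at this
    have h0 : ∑ k : Fin (r + 1), Polynomial.eval β
        (Lf k * Pf.comp (X ^ b ^ (k : ℕ)) *
          ∏ j ∈ Finset.univ.erase k, Qf.comp (X ^ b ^ (j : ℕ))) = 0 := by
      rw [← Polynomial.eval_finset_sum, hpolyF, Polynomial.eval_zero]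
    have hzero : ∀ k ∈ Finset.univ, k ≠ Fin.last r → Polynomial.eval β
        (Lf k * Pf.comp (X ^ b ^ (k : ℕ)) *
          ∏ j ∈ Finset.univ.erase k, Qf.comp (X ^ b ^ (j : ℕ))) = 0 := by
      intro k _ hk
      rw [Polynomial.eval_mul, Polynomial.eval_prod]
      have hlast : Fin.last r ∈ Finset.univ.erase k :=
        Finset.mem_erase.mpr ⟨Ne.symm hk, Finset.mem_univ _⟩
      rw [Finset.prod_eq_zero hlast ?_, mul_zero]
      rw [Polynomial.eval_comp, Polynomial.eval_pow, Polynomial.eval_X, Fin.val_last, hβ]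
      exact hδroot
    rw [Finset.sum_eq_single_of_mem (Fin.last r) (Finset.mem_univ _) hzero] at h0
    rw [Polynomial.eval_mul, Polynomial.eval_mul, Polynomial.eval_prod,
      Polynomial.eval_comp, Polynomial.eval_pow, Polynomial.eval_X, Fin.val_last, hβ] at h0
    rcases mul_eq_zero.mp h0 with h1 | h1
    · rcases mul_eq_zero.mp h1 with h2 | h2
      · exact hL h2
      · exact hPδ h2
    · obtain ⟨j, hjmem, hj0⟩ := Finset.prod_eq_zero_iff.mp h1
      rw [Polynomial.eval_comp, Polynomial.eval_pow, Polynomial.eval_X] at hj0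
      have hjlt : (j : ℕ) < r := Fin.val_lt_last (Finset.mem_erase.mp hjmem).1
      exact absurd hj0 (by simpa using hQj (j : ℕ) hjlt)
  -- now show Q is constant
  have hQdeg : Q.natDegree = 0 := by
    by_contra hQdeg
    have hQfdeg : Qf.natDegree ≠ 0 := by
      rwa [hQfdef, Polynomial.natDegree_map]
    obtain ⟨δ0, hδ0⟩ := IsAlgClosed.exists_root Qf
      (fun h => hQfdeg (by rw [Polynomial.natDegree_eq_zero_iff_degree_le_zero]; exact le_of_eq h))
    set PS : Finset F := Qf.roots.toFinset with hPS
    have hPSmem : ∀ ε : F, ε ∈ PS ↔ Qf.eval ε = 0 := by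
      intro ε
      rw [hPS, Multiset.mem_toFinset, Polynomial.mem_roots hQfne]
      exact Iff.rfl
    have hPole0 : ∀ ε ∈ PS, ε ≠ 0 := by
      intro ε hε h0
      apply hQf0
      have h1 := (hPSmem ε).mp hε
      rwa [h0] at h1
    have hdlt : d < b ^ r := by
      have : b ^ (r - 1) ≤ b ^ r := Nat.pow_le_pow_right (by omega) (by omega)
      omega
    have hLfdeg : (Lf (Fin.last r)).natDegree ≤ d := by
      rw [hLfdef]
      simpa [Polynomial.natDegree_map] using hdk (Fin.last r)
    -- every pole has a strict preimage pole
    have hE1 : ∀ δ ∈ PS, ∃ ε ∈ PS, ∃ e, 1 ≤ e ∧ e ≤ r ∧ ε ^ b ^ e = δ := by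
      intro δ hδ
      have hδne : δ ≠ 0 := hPole0 δ hδ
      set R1 : Finset F := ((X : F[X]) ^ b ^ r - C δ).roots.toFinset with hR1
      have hR1card : R1.card = b ^ r := aux_card_rootSet hδne (by have := hbpow r; omega)
      have hex : ∃ β ∈ R1, (Lf (Fin.last r)).eval β ≠ 0 := by
        by_contra hall
        push_neg at hall
        have hsub : R1 ⊆ (Lf (Fin.last r)).roots.toFinset := by
          intro β hβ
          rw [Multiset.mem_toFinset, Polynomial.mem_roots hLfrne]
          exact hall β hβ
        have hcard1 : R1.card ≤ (Lf (Fin.last r)).roots.toFinset.card :=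
          Finset.card_le_card hsub
        have hcard2 : (Lf (Fin.last r)).roots.toFinset.card ≤ (Lf (Fin.last r)).natDegree :=
          le_trans (Multiset.toFinset_card_le _) (Polynomial.card_roots' _)
        omega
      obtain ⟨β, hβR, hβL⟩ := hex
      have hβpow : β ^ b ^ r = δ := aux_mem_rootSet (by have := hbpow r; omega) hβR
      rcases hdich δ ((hPSmem δ).mp hδ) β hβpow with h | ⟨j, hjlt, hj0⟩
      · exact absurd h hβL
      · refine ⟨β ^ b ^ j, (hPSmem _).mpr hj0, r - j, by omega, by omega, ?_⟩
        rw [← pow_mul, ← pow_add, show j + (r - j) = r from by omega]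
        exact hβpow
    -- all poles are roots of unity of order prime to b
    have hTor : ∀ δ ∈ PS, ∃ E, 1 ≤ E ∧ δ ^ (b ^ E - 1) = 1 := by
      intro δ hδ
      choose ε hεPS e he1 her hpow using hE1
      set g : ℕ → {x : F // x ∈ PS} :=
        fun n => Nat.rec ⟨δ, hδ⟩ (fun _ p => ⟨ε p.1 p.2, hεPS p.1 p.2⟩) n with hg
      have hgs : ∀ n : ℕ, (g (n + 1)).1 ^ b ^ e (g n).1 (g n).2 = (g n).1 :=
        fun n => hpow _ _
      have hkey : ∀ st k : ℕ,
          (g (st + k)).1 ^ b ^ (∑ t ∈ Finset.range k, e (g (st + t)).1 (g (st + t)).2)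
            = (g st).1 := by
        intro st k
        induction k with
        | zero => simp
        | succ k ih =>
          rw [Finset.sum_range_succ, pow_add, mul_comm, pow_mul]
          rw [show st + (k + 1) = (st + k) + 1 from by omega, hgs (st + k)]
          exact ih
      obtain ⟨i, j, hlt, hgij⟩ : ∃ i j : ℕ, i < j ∧ g i = g j := by
        obtain ⟨i, j, hne, hq⟩ := Finite.exists_ne_map_eq_of_infinite g
        rcases hne.lt_or_gt with h | h
        · exact ⟨i, j, h, hq⟩
        · exact ⟨j, i, h, hq.symm⟩
      set D : ℕ := ∑ t ∈ Finset.range (j - i), e (g (i + t)).1 (g (i + t)).2 with hD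
      have hD1 : 1 ≤ D := by
        have hmem : 0 ∈ Finset.range (j - i) := Finset.mem_range.mpr (by omega)
        calc 1 ≤ e (g (i + 0)).1 (g (i + 0)).2 := he1 _ _
          _ ≤ D := Finset.single_le_sum (f := fun t => e (g (i + t)).1 (g (i + t)).2)
              (fun _ _ => Nat.zero_le _) hmem
      have hfix : ((g i : {x : F // x ∈ PS}) : F) ^ b ^ D = ((g i : {x : F // x ∈ PS}) : F) := by
        have h1 := hkey i (j - i)
        rw [← hD, show i + (j - i) = j from by omega, ← hgij] at h1
        exact h1
      set D' : ℕ := ∑ t ∈ Finset.range i, e (g (0 + t)).1 (g (0 + t)).2 with hD'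
      have hδeq : ((g i : {x : F // x ∈ PS}) : F) ^ b ^ D' = δ := by
        have h2 := hkey 0 i
        rw [← hD', show (0 : ℕ) + i = i from by omega] at h2
        exact h2
      have hδfix : δ ^ b ^ D = δ := by
        calc δ ^ b ^ D = (((g i : {x : F // x ∈ PS}) : F) ^ b ^ D') ^ b ^ D := by rw [hδeq]
          _ = (((g i : {x : F // x ∈ PS}) : F) ^ b ^ D) ^ b ^ D' := by
              rw [← pow_mul, ← pow_mul, mul_comm]
          _ = ((g i : {x : F // x ∈ PS}) : F) ^ b ^ D' := by rw [hfix]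
          _ = δ := hδeq
      have hδne : δ ≠ 0 := hPole0 δ hδ
      refine ⟨D, hD1, ?_⟩
      have hcalc : δ ^ (b ^ D - 1) * δ = 1 * δ := by
        rw [one_mul, ← pow_succ, Nat.sub_add_cancel (hbpow D)]
        exact hδfix
      exact mul_right_cancel₀ hδne hcalc
    -- construct the common exponent M
    choose Efun hEfun1 hEfun2 using hTor
    set M : ℕ := ∏ x ∈ PS.attach, (b ^ Efun x.1 x.2 - 1) with hM
    have hMb : Nat.Coprime M b := by
      apply Nat.Coprime.prod_left
      intro x _
      exact aux_coprime_pow_sub_one hb (hEfun1 x.1 x.2)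
    have hεM : ∀ ε ∈ PS, ε ^ M = 1 := by
      intro ε hε
      have hdvd : (b ^ Efun ε hε - 1) ∣ M :=
        Finset.dvd_prod_of_mem (fun x : {x : F // x ∈ PS} => b ^ Efun x.1 x.2 - 1)
          (Finset.mem_attach PS ⟨ε, hε⟩)
      obtain ⟨c, hc⟩ := hdvd
      rw [hc, pow_mul, hEfun2 ε hε, one_pow]
    -- final counting at the pole δ0
    have hδ0PS : δ0 ∈ PS := (hPSmem δ0).mpr hδ0
    have hδ0ne : δ0 ≠ 0 := hPole0 δ0 hδ0PS
    set R1 : Finset F := ((X : F[X]) ^ b ^ r - C δ0).roots.toFinset with hR1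
    have hR1card : R1.card = b ^ r := aux_card_rootSet hδ0ne (by have := hbpow r; omega)
    have hR1pow : ∀ β ∈ R1, β ^ b ^ r = δ0 := fun β hβ => aux_mem_rootSet (by have := hbpow r; omega) hβ
    set S1 : Finset F := R1.filter (fun β => (Lf (Fin.last r)).eval β = 0) with hS1
    set S2 : Finset F := R1.filter (fun β => ∃ j, j < r ∧ Qf.eval (β ^ b ^ j) = 0) with hS2
    have hcover : R1 ⊆ S1 ∪ S2 := by
      intro β hβ
      rcases hdich δ0 hδ0 β (hR1pow β hβ) with h | h
      · exact Finset.mem_union_left _ (Finset.mem_filter.mpr ⟨hβ, h⟩)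
      · exact Finset.mem_union_right _ (Finset.mem_filter.mpr ⟨hβ, h⟩)
    have hS1card : S1.card ≤ d := by
      have hsub : S1 ⊆ (Lf (Fin.last r)).roots.toFinset := by
        intro β hβ
        rw [Multiset.mem_toFinset, Polynomial.mem_roots hLfrne]
        exact (Finset.mem_filter.mp hβ).2
      calc S1.card ≤ (Lf (Fin.last r)).roots.toFinset.card := Finset.card_le_card hsub
        _ ≤ (Lf (Fin.last r)).natDegree :=
            le_trans (Multiset.toFinset_card_le _) (Polynomial.card_roots' _)
        _ ≤ d := hLfdeg
    have hS2card : S2.card ≤ b ^ (r - 1) := by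
      rcases S2.eq_empty_or_nonempty with he | ⟨β1, hβ1⟩
      · rw [he]
        simp [Nat.one_le_pow, hbpow]
      · -- every element of S2 satisfies x ^ (b^(r-1) * M) = 1  after division by β1
        have hkeyS2 : ∀ β ∈ S2, β ^ (b ^ (r - 1) * M) = 1 := by
          intro β hβ
          obtain ⟨hβR1, j, hjlt, hj0⟩ := Finset.mem_filter.mp hβ
          have hε : β ^ b ^ j ∈ PS := (hPSmem _).mpr hj0
          have h1 : β ^ (b ^ j * M) = 1 := by
            rw [pow_mul]
            exact hεM _ hε
          have h2 : b ^ (r - 1) * M = (b ^ j * M) * b ^ (r - 1 - j) := by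
            have h2a : b ^ j * b ^ (r - 1 - j) = b ^ (r - 1) := by
              rw [← pow_add]
              congr 1
              omega
            calc b ^ (r - 1) * M = b ^ j * b ^ (r - 1 - j) * M := by rw [h2a]
              _ = (b ^ j * M) * b ^ (r - 1 - j) := by ring
          rw [h2, pow_mul, h1, one_pow]
        have hβ1ne : β1 ≠ 0 := by
          intro h
          apply hδ0ne
          rw [← hR1pow β1 (Finset.mem_filter.mp hβ1).1, h]
          rw [zero_pow (by have := hbpow r; omega)]
        have hβ1r : β1 ^ b ^ r = δ0 := hR1pow β1 (Finset.mem_filter.mp hβ1).1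
        have hmap : ∀ β ∈ S2, β * β1⁻¹ ∈ ((X : F[X]) ^ b ^ (r - 1) - C 1).roots.toFinset := by
          intro β hβ
          have hx1 : (β * β1⁻¹) ^ b ^ r = 1 := by
            rw [mul_pow, inv_pow, hR1pow β (Finset.mem_filter.mp hβ).1, hβ1r,
              mul_inv_cancel₀ hδ0ne]
          have hx2 : (β * β1⁻¹) ^ (b ^ (r - 1) * M) = 1 := by
            rw [mul_pow, inv_pow, hkeyS2 β hβ, hkeyS2 β1 hβ1, inv_one, mul_one]
          have hdvd1 : orderOf (β * β1⁻¹) ∣ b ^ r := orderOf_dvd_of_pow_eq_one hx1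
          have hdvd2 : orderOf (β * β1⁻¹) ∣ b ^ (r - 1) * M := orderOf_dvd_of_pow_eq_one hx2
          have hgcd : Nat.gcd (b ^ r) (b ^ (r - 1) * M) = b ^ (r - 1) := by
            have h3 : b ^ r = b ^ (r - 1) * b := by
              rw [← pow_succ]
              congr 1
              omega
            rw [h3, Nat.gcd_mul_left, Nat.Coprime.gcd_eq_one (Nat.Coprime.symm hMb), mul_one]
          have hdvd3 : orderOf (β * β1⁻¹) ∣ b ^ (r - 1) := by
            rw [← hgcd]
            exact Nat.dvd_gcd hdvd1 hdvd2
          have hx3 : (β * β1⁻¹) ^ b ^ (r - 1) = 1 := orderOf_dvd_iff_pow_eq_one.mp hdvd3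
          rw [Multiset.mem_toFinset,
            Polynomial.mem_roots (Polynomial.X_pow_sub_C_ne_zero (by have := hbpow (r-1); omega) 1)]
          simp [Polynomial.IsRoot, sub_eq_zero, hx3]
        have hinjS2 : Set.InjOn (fun β => β * β1⁻¹) S2 := by
          intro a _ c _ hac
          exact mul_right_cancel₀ (inv_ne_zero hβ1ne) hac
        calc S2.card ≤ ((X : F[X]) ^ b ^ (r - 1) - C 1).roots.toFinset.card :=
              Finset.card_le_card_of_injOn _ hmap hinjS2
          _ ≤ Multiset.card ((X : F[X]) ^ b ^ (r - 1) - C 1).roots :=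
              Multiset.toFinset_card_le _
          _ ≤ ((X : F[X]) ^ b ^ (r - 1) - C 1).natDegree := Polynomial.card_roots' _
          _ = b ^ (r - 1) := Polynomial.natDegree_X_pow_sub_C
    have hfinal : (b : ℕ) ^ r ≤ d + b ^ (r - 1) := by
      calc (b : ℕ) ^ r = R1.card := hR1card.symm
        _ ≤ (S1 ∪ S2).card := Finset.card_le_card hcover
        _ ≤ S1.card + S2.card := Finset.card_union_le _ _
        _ ≤ d + b ^ (r - 1) := by omega
    have h2br : 2 * b ^ (r - 1) ≤ b ^ r := by
      have h3 : b ^ r = b ^ (r - 1) * b := by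
        rw [← pow_succ]
        congr 1
        omega
      rw [h3]
      calc 2 * b ^ (r - 1) = b ^ (r - 1) * 2 := by ring
        _ ≤ b ^ (r - 1) * b := Nat.mul_le_mul_left _ (by omega)
    omega
  -- Q is a nonzero constant
  obtain ⟨q, hq⟩ : ∃ q : K, Q = C q :=
    ⟨Q.coeff 0, Polynomial.eq_C_of_natDegree_eq_zero hQdeg⟩
  have hq0 : q ≠ 0 := fun h => hQ (by rw [hq, h, map_zero])
  -- deduce the purely polynomial relation
  have hsum0 : (∑ k : Fin (r + 1), ℓ k * P.comp (X ^ b ^ (k : ℕ))) = 0 := by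
    have hsum2 : (∑ k : Fin (r + 1), ℓ k * P.comp (X ^ b ^ (k : ℕ))) * C q ^ r = 0 := by
      rw [Finset.sum_mul, ← hpoly]
      apply Finset.sum_congr rfl
      intro k _
      rw [mul_assoc, mul_assoc]
      congr 1
      congr 1
      have hconst : ∀ j ∈ Finset.univ.erase k,
          Q.comp (X ^ b ^ (j : ℕ)) = C q := by
        intro j _
        rw [hq, Polynomial.C_comp]
      rw [Finset.prod_congr rfl hconst, Finset.prod_const,
        Finset.card_erase_of_mem (Finset.mem_univ k), Finset.card_univ, Fintype.card_fin,
        Nat.add_sub_cancel]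
    rcases mul_eq_zero.mp hsum2 with h | h
    · exact h
    · exact absurd h (pow_ne_zero _ (fun hh => hq0 (by
        have := congrArg (Polynomial.eval 0) hh
        simpa using this)))
  -- degree argument : P is constant
  have hPdeg : P.natDegree = 0 := by
    by_contra hPdeg
    have hn1 : 1 ≤ P.natDegree := Nat.one_le_iff_ne_zero.mpr hPdeg
    rw [Fin.sum_univ_castSucc] at hsum0
    have heq : ℓ (Fin.last r) * P.comp (X ^ b ^ ((Fin.last r : Fin (r + 1)) : ℕ))
        = -(∑ k : Fin r, ℓ (Fin.castSucc k) * P.comp (X ^ b ^ ((Fin.castSucc k) : ℕ))) := by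
      rw [eq_neg_iff_add_eq_zero, add_comm]
      exact hsum0
    have hAdeg : (∑ k : Fin r, ℓ (Fin.castSucc k) *
        P.comp (X ^ b ^ ((Fin.castSucc k) : ℕ))).natDegree ≤ d + P.natDegree * b ^ (r - 1) := by
      apply Polynomial.natDegree_sum_le_of_forall_le
      intro k _
      by_cases hk0 : ℓ (Fin.castSucc k) = 0
      · simp [hk0]
      · rw [Polynomial.natDegree_mul hk0 (aux_comp_ne_zero hP (hbpow _)),
          Polynomial.natDegree_comp, Polynomial.natDegree_X_pow]
        have h1 : (ℓ (Fin.castSucc k)).natDegree ≤ d := hdk _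
        have h2 : b ^ ((Fin.castSucc k : Fin (r + 1)) : ℕ) ≤ b ^ (r - 1) := by
          apply Nat.pow_le_pow_right (by omega)
          have := k.isLt
          simp only [Fin.coe_castSucc]
          omega
        have h3 : P.natDegree * b ^ ((Fin.castSucc k : Fin (r + 1)) : ℕ)
            ≤ P.natDegree * b ^ (r - 1) := Nat.mul_le_mul_left _ h2
        omega
    have hTdeg : (ℓ (Fin.last r) * P.comp (X ^ b ^ ((Fin.last r : Fin (r + 1)) : ℕ))).natDegree
        = (ℓ (Fin.last r)).natDegree + P.natDegree * b ^ r := by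
      rw [Polynomial.natDegree_mul hlr (aux_comp_ne_zero hP (hbpow _)),
        Polynomial.natDegree_comp, Polynomial.natDegree_X_pow, Fin.val_last]
    have hcon := congrArg Polynomial.natDegree heq
    rw [Polynomial.natDegree_neg, hTdeg] at hcon
    have hlt : d + P.natDegree * b ^ (r - 1) < P.natDegree * b ^ r := by
      have h2 : 2 * b ^ (r - 1) ≤ b ^ r := by
        have h3 : b ^ r = b ^ (r - 1) * b := by
          rw [← pow_succ]
          congr 1
          omega
        rw [h3]
        calc 2 * b ^ (r - 1) = b ^ (r - 1) * 2 := by ring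
          _ ≤ b ^ (r - 1) * b := Nat.mul_le_mul_left _ (by omega)
      calc d + P.natDegree * b ^ (r - 1) < b ^ (r - 1) + P.natDegree * b ^ (r - 1) := by omega
        _ ≤ P.natDegree * b ^ (r - 1) + P.natDegree * b ^ (r - 1) := by
            have h4 : 1 * b ^ (r - 1) ≤ P.natDegree * b ^ (r - 1) :=
              Nat.mul_le_mul_right _ (by omega)
            omega
        _ = P.natDegree * (2 * b ^ (r - 1)) := by ring
        _ ≤ P.natDegree * b ^ r := Nat.mul_le_mul_left _ h2
    have := hAdeg
    linarith [hcon, hAdeg, hlt]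
  obtain ⟨p, hp⟩ : ∃ p : K, P = C p :=
    ⟨P.coeff 0, Polynomial.eq_C_of_natDegree_eq_zero hPdeg⟩
  refine ⟨p / q, ?_⟩
  have h1 := y.num_div_denom
  rw [← h1, show y.num = C p from hp, show y.denom = C q from hq,
    RatFunc.algebraMap_C, RatFunc.algebraMap_C, ← map_div₀ (RatFunc.C (K := K))]
end

section
/- Let b ≥ 2, and let L = ℓ_r M^r + ⋯ + ℓ_0 with ℓ_0 ℓ_r ≠ 0. Suppose y = p/(x^v̄ q) is a rational solution of L y = 0 written in lowest terms (v̄ ≥ 0, p, q coprime, q(0) ≠ 0, and p(0) ≠ 0 if v̄ > 0). Then M^r(q) divides ℓ_r · lcm_{0 ≤ i ≤ r−1} M^i(q). -/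
open Polynomial

noncomputable section

/-- The least common multiple of a list of polynomials over a field. -/
def polyLcm {K : Type*} [Field K] (l : List K[X]) : K[X] :=
  letI := Classical.decEq K[X]
  l.foldr EuclideanDomain.lcm 1

lemma dvd_polyLcm {K : Type*} [Field K] {l : List K[X]} {x : K[X]} (hx : x ∈ l) :
    x ∣ polyLcm l := by
  letI := Classical.decEq K[X]
  unfold polyLcm
  induction l with
  | nil => simp at hx
  | cons a t ih =>
    rcases List.mem_cons.1 hx with rfl | h
    · exact EuclideanDomain.dvd_lcm_left _ _
    · exact (ih h).trans (EuclideanDomain.dvd_lcm_right _ _)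

theorem stmt_15 {K : Type*} [Field K] (b r : ℕ) (hb : 2 ≤ b) (hr : 0 < r)
    (ℓ : Fin (r + 1) → K[X]) (hl0 : ℓ 0 ≠ 0) (hlr : ℓ (Fin.last r) ≠ 0)
    (p q : K[X]) (v : ℕ) (hcop : IsCoprime p q) (hq0 : q.eval 0 ≠ 0)
    (hp0 : 0 < v → p.eval 0 ≠ 0)
    (hsol : ∑ k : Fin (r + 1),
        algebraMap K[X] (RatFunc K) (ℓ k) *
          (algebraMap K[X] (RatFunc K) (p.comp (X ^ b ^ (k : ℕ))) /
            algebraMap K[X] (RatFunc K) ((X ^ v * q).comp (X ^ b ^ (k : ℕ)))) = 0) :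
    q.comp (X ^ b ^ r) ∣
      ℓ (Fin.last r) * polyLcm ((List.range r).map fun i => q.comp (X ^ b ^ i)) := by
  classical
  set φ := algebraMap K[X] (RatFunc K) with hφdef
  have hφ : Function.Injective φ := IsFractionRing.injective _ _
  have hbk : ∀ k : ℕ, b ^ k ≠ 0 := fun k => pow_ne_zero _ (by omega)
  have hcne : ∀ k : ℕ, q.comp (X ^ b ^ k) ≠ 0 := by
    intro k h
    apply hq0
    have := congrArg (eval 0) h
    simpa [eval_comp, zero_pow (hbk k)] using this
  have hφc : ∀ k : ℕ, φ (q.comp (X ^ b ^ k)) ≠ 0 := fun k =>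
    (map_ne_zero_iff φ hφ).2 (hcne k)
  have hφX : ∀ n : ℕ, φ (X ^ n : K[X]) ≠ 0 :=
    fun n => (map_ne_zero_iff φ hφ).2 (pow_ne_zero _ X_ne_zero)
  set T := polyLcm ((List.range r).map fun i => q.comp (X ^ b ^ i)) with hTdef
  have hdvdT : ∀ i, i < r → q.comp (X ^ b ^ i) ∣ T := by
    intro i hi
    exact dvd_polyLcm (List.mem_map_of_mem (List.mem_range.2 hi))
  have hdvd2 : ∀ i : Fin r,
      (X ^ (b ^ (i : ℕ) * v) * q.comp (X ^ b ^ (i : ℕ))) ∣ (X ^ (b ^ r * v) * T) := by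
    intro i
    exact mul_dvd_mul
      (pow_dvd_pow X (Nat.mul_le_mul_right _ (Nat.pow_le_pow_right (by omega) i.2.le)))
      (hdvdT i i.2)
  choose u hu using hdvd2
  set S : K[X] := ∑ i : Fin r, ℓ i.castSucc * p.comp (X ^ b ^ (i : ℕ)) * u i with hS
  have hden : ∀ k : ℕ,
      (X ^ v * q).comp (X ^ b ^ k) = X ^ (b ^ k * v) * q.comp (X ^ b ^ k) := by
    intro k
    rw [mul_comp, X_pow_comp, ← pow_mul]
  have key : q.comp (X ^ b ^ r) * S + ℓ (Fin.last r) * p.comp (X ^ b ^ r) * T = 0 := by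
    apply hφ
    rw [map_zero]
    have heq : φ (q.comp (X ^ b ^ r) * S + ℓ (Fin.last r) * p.comp (X ^ b ^ r) * T)
        = (∑ k : Fin (r + 1), φ (ℓ k) *
            (φ (p.comp (X ^ b ^ (k : ℕ))) / φ ((X ^ v * q).comp (X ^ b ^ (k : ℕ))))) *
          φ (X ^ (b ^ r * v) * T * q.comp (X ^ b ^ r)) := by
      rw [Fin.sum_univ_castSucc, add_mul, Finset.sum_mul, map_add, hS, Finset.mul_sum,
        map_sum]
      congr 1
      · apply Finset.sum_congr rfl
        intro i _
        have hui := hu i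
        rw [hden, Fin.coe_castSucc]
        have : (X ^ (b ^ r * v) * T * q.comp (X ^ b ^ r) : K[X])
            = (X ^ (b ^ (i : ℕ) * v) * q.comp (X ^ b ^ (i : ℕ))) *
              (u i * q.comp (X ^ b ^ r)) := by
          rw [← mul_assoc, ← hui]
        rw [this]
        simp only [map_mul, map_pow]
        have hX : φ (X : K[X]) ≠ 0 := (map_ne_zero_iff φ hφ).2 X_ne_zero
        have h2 := hφc (i : ℕ)
        field_simp
      · rw [hden, Fin.val_last]
        simp only [map_mul, map_pow]
        have hX : φ (X : K[X]) ≠ 0 := (map_ne_zero_iff φ hφ).2 X_ne_zero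
        have h2 := hφc r
        field_simp
    rw [heq, hsol, zero_mul]
  have hcop' : IsCoprime (p.comp (X ^ b ^ r)) (q.comp (X ^ b ^ r)) := by
    obtain ⟨a, c, hac⟩ := hcop
    refine ⟨a.comp (X ^ b ^ r), c.comp (X ^ b ^ r), ?_⟩
    have := congrArg (fun f : K[X] => f.comp (X ^ b ^ r)) hac
    simpa [add_comp, mul_comp] using this
  have hdvd : q.comp (X ^ b ^ r) ∣ (ℓ (Fin.last r) * T) * p.comp (X ^ b ^ r) :=
    ⟨-S, by linear_combination key⟩
  exact hcop'.symm.dvd_of_dvd_mul_right hdvd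
end
end

section
/- Let b ≥ 2, ω a primitive b-th root of unity in K, and f_0, …, f_{b−1}, u ∈ K[x]. The polynomial ℓ = M(f_0) + x·M(f_1) + ⋯ + x^{b−1}·M(f_{b−1}) is divisible by M(u) if and only if u divides each f_i for 0 ≤ i < b. -/
open Polynomial

private lemma key_coeff {K : Type*} [Field K] {b : ℕ} (hb : 0 < b)
    (h : Fin b → K[X]) (i : Fin b) (n : ℕ) :
    (∑ j : Fin b, X ^ (j : ℕ) * expand K b (h j)).coeff (b * n + i) = (h i).coeff n := by
  rw [finset_sum_coeff, Finset.sum_eq_single i]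
  · rw [show b * n + (i : ℕ) = b * n + (i : ℕ) from rfl, coeff_X_pow_mul,
      Polynomial.coeff_expand hb, if_pos (Dvd.intro n rfl), Nat.mul_div_cancel_left n hb]
  · intro j _ hj
    rw [mul_comm, coeff_mul_X_pow']
    split_ifs with hle
    · rw [Polynomial.coeff_expand hb, if_neg]
      rintro ⟨k, hk⟩
      apply hj
      have heq : b * n + (i : ℕ) = b * k + (j : ℕ) := by omega
      have hi : ((b * n + (i : ℕ)) % b) = (i : ℕ) := by
        rw [Nat.add_comm, Nat.add_mul_mod_self_left, Nat.mod_eq_of_lt i.isLt]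
      have hj' : ((b * k + (j : ℕ)) % b) = (j : ℕ) := by
        rw [Nat.add_comm, Nat.add_mul_mod_self_left, Nat.mod_eq_of_lt j.isLt]
      have : (j : ℕ) = (i : ℕ) := by rw [← hj', ← heq, hi]
      exact Fin.ext this
    · rfl
  · exact fun h => absurd (Finset.mem_univ i) h

private lemma key_unique {K : Type*} [Field K] {b : ℕ} (hb : 0 < b)
    (h k : Fin b → K[X])
    (H : (∑ j : Fin b, X ^ (j : ℕ) * expand K b (h j)) =
      ∑ j : Fin b, X ^ (j : ℕ) * expand K b (k j)) (i : Fin b) : h i = k i := by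
  ext n
  rw [← key_coeff hb h i n, H, key_coeff hb k i n]

theorem stmt_17 {K : Type*} [Field K] (b : ℕ) (hb : 2 ≤ b)
    (ω : K) (hω : IsPrimitiveRoot ω b)
    (f : Fin b → K[X]) (u : K[X]) :
    u.comp (X ^ b) ∣ ∑ i : Fin b, X ^ (i : ℕ) * (f i).comp (X ^ b) ↔
      ∀ i : Fin b, u ∣ f i := by
  have hb0 : 0 < b := by omega
  simp_rw [← Polynomial.expand_eq_comp_X_pow]
  constructor
  · rintro ⟨q, hq⟩
    set g : Fin b → K[X] := fun i =>
      ∑ n ∈ Finset.range (q.natDegree + 1), C (q.coeff (b * n + i)) * X ^ n with hg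
    have hdec : q = ∑ i : Fin b, X ^ (i : ℕ) * expand K b (g i) := by
      ext m
      have hi : (m % b) < b := Nat.mod_lt _ hb0
      have h1 := key_coeff hb0 g ⟨m % b, hi⟩ (m / b)
      simp only [Fin.val_mk] at h1
      rw [Nat.div_add_mod] at h1
      rw [h1, hg]
      simp only [finset_sum_coeff, coeff_C_mul, coeff_X_pow, mul_ite, mul_one, mul_zero,
        Fin.val_mk]
      rw [Finset.sum_ite_eq (Finset.range (q.natDegree + 1))]
      split_ifs with hmem
      · rw [Nat.div_add_mod]
      · rw [Finset.mem_range, not_lt] at hmem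
        refine Polynomial.coeff_eq_zero_of_natDegree_lt ?_
        have h2 : m / b ≤ m := Nat.div_le_self m b
        omega
    have hmain : (∑ i : Fin b, X ^ (i : ℕ) * expand K b (f i)) =
        ∑ i : Fin b, X ^ (i : ℕ) * expand K b (u * g i) := by
      rw [hq, hdec, Finset.mul_sum]
      refine Finset.sum_congr rfl fun i _ => ?_
      rw [map_mul]
      ring
    intro i
    exact ⟨g i, key_unique hb0 f (fun i => u * g i) hmain i⟩
  · intro h
    refine Finset.dvd_sum fun i _ => ?_
    obtain ⟨c, hc⟩ := h i
    exact Dvd.dvd.mul_left ⟨expand K b c, by rw [hc, map_mul]⟩ _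
end

section
/- Let b ≥ 2 and let L = ℓ_r M^r + ⋯ + ℓ_0 be a Mahler operator with polynomial coefficients and ℓ_0 ≠ 0. If the leftmost edge of the lower Newton polygon of L is horizontal (i.e., ν = max_{k ≥ 1} (v_0 − v_k)/(b^k − 1) = 0, so v_0 ≤ v_k for all k with equality for some k ≥ 1) and admissible (the coefficients of x^{v_0} in ℓ_0 and of x^{v_k} in those ℓ_k with v_k = v_0 sum to zero), then the equation L y = 0 admits a formal power series solution y ∈ K[[x]] with y(0) ≠ 0. -/
open Polynomial

noncomputable section

/-- The Mahler substitution `y(x) ↦ y(x^c)` on formal power series. -/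
def mahlerPS {K : Type*} [Field K] (c : ℕ) (y : PowerSeries K) : PowerSeries K :=
  PowerSeries.mk fun n => if c ∣ n then PowerSeries.coeff (n / c) y else 0

/-- The recursively constructed solution coefficients. -/
noncomputable def solCoef {K : Type*} [Field K] (b r v : ℕ) (ℓ : Fin (r+1) → K[X]) : ℕ → K
  | 0 => 1
  | n+1 => -((ℓ 0).coeff v)⁻¹ * ∑ k : Fin (r+1), ∑ j ∈ (Finset.range (n+1)).attach,
      (if b ^ (k:ℕ) * j.1 ≤ n+1+v then (ℓ k).coeff (n+1+v - b ^ (k:ℕ) * j.1) else 0)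
        * solCoef b r v ℓ j.1
  decreasing_by exact Finset.mem_range.mp j.2

lemma coeff_mul_mahler {K : Type*} [Field K] (p : K[X]) (c : ℕ) (hc : 0 < c)
    (y : PowerSeries K) (m : ℕ) :
    PowerSeries.coeff m ((↑p : PowerSeries K) * mahlerPS c y) =
      ∑ j ∈ Finset.range (m+1),
        (if c * j ≤ m then p.coeff (m - c*j) else 0) * PowerSeries.coeff j y := by
  rw [mul_comm, PowerSeries.coeff_mul,
    Finset.Nat.sum_antidiagonal_eq_sum_range_succ
      (f := fun J i => PowerSeries.coeff J (mahlerPS c y) * PowerSeries.coeff i (↑p : PowerSeries K))]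
  have hL : ∀ J, PowerSeries.coeff J (mahlerPS c y) * PowerSeries.coeff (m - J) (↑p : PowerSeries K)
      = if c ∣ J then PowerSeries.coeff (J/c) y * p.coeff (m - J) else 0 := by
    intro J
    simp only [mahlerPS, PowerSeries.coeff_mk, Polynomial.coeff_coe, ite_mul, zero_mul]
  have hR : ∀ j, (if c * j ≤ m then p.coeff (m - c*j) else 0) * PowerSeries.coeff j y
      = if c * j ≤ m then p.coeff (m - c*j) * PowerSeries.coeff j y else 0 := by
    intro j; split <;> simp
  simp only [hL, hR, ← Finset.sum_filter]
  refine Finset.sum_nbij' (fun J => J / c) (fun j => c * j) ?_ ?_ ?_ ?_ ?_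
  · intro J hJ
    simp only [Finset.mem_filter, Finset.mem_range] at hJ ⊢
    obtain ⟨hJm, hdvd⟩ := hJ
    constructor
    · exact lt_of_le_of_lt (Nat.div_le_self J c) hJm
    · rw [Nat.mul_div_cancel' hdvd]; omega
  · intro j hj
    simp only [Finset.mem_filter, Finset.mem_range] at hj ⊢
    exact ⟨by omega, Dvd.intro j rfl⟩
  · intro J hJ
    simp only [Finset.mem_filter, Finset.mem_range] at hJ
    exact Nat.mul_div_cancel' hJ.2
  · intro j hj
    exact Nat.mul_div_cancel_left j hc
  · intro J hJ
    simp only [Finset.mem_filter, Finset.mem_range] at hJ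
    rw [Nat.mul_div_cancel' hJ.2, mul_comm]

theorem stmt_18 {K : Type*} [Field K] (b r : ℕ) (hb : 2 ≤ b) (hr : 0 < r)
    (ℓ : Fin (r + 1) → K[X]) (hl0 : ℓ 0 ≠ 0) (hlr : ℓ (Fin.last r) ≠ 0)
    (hmin : ∀ k : Fin (r + 1), ℓ k ≠ 0 →
      (ℓ 0).natTrailingDegree ≤ (ℓ k).natTrailingDegree)
    (hhoriz : ∃ k : Fin (r + 1), k ≠ 0 ∧ ℓ k ≠ 0 ∧
      (ℓ k).natTrailingDegree = (ℓ 0).natTrailingDegree)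
    (hadm : ∑ k : Fin (r + 1), (ℓ k).coeff (ℓ 0).natTrailingDegree = 0) :
    ∃ y : PowerSeries K,
      (∑ k : Fin (r + 1), (↑(ℓ k) : PowerSeries K) * mahlerPS (b ^ (k : ℕ)) y = 0) ∧
      PowerSeries.constantCoeff y ≠ 0 := by
  classical
  set v := (ℓ 0).natTrailingDegree with hv
  have hc0 : (ℓ 0).coeff v ≠ 0 := by
    have := mt Polynomial.trailingCoeff_eq_zero.mp hl0
    simpa [Polynomial.trailingCoeff, hv] using this
  have hcz : ∀ (k : Fin (r+1)) (i : ℕ), i < v → (ℓ k).coeff i = 0 := by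
    intro k i hi
    by_cases h : ℓ k = 0
    · simp [h]
    · exact Polynomial.coeff_eq_zero_of_lt_natTrailingDegree (lt_of_lt_of_le hi (hmin k h))
  have hbpos : ∀ k : Fin (r+1), 0 < b ^ (k:ℕ) := fun k => pow_pos (by omega) _
  refine ⟨PowerSeries.mk (solCoef b r v ℓ), ?_, by simp [solCoef]⟩
  ext m
  rw [map_sum, map_zero]
  simp only [coeff_mul_mahler _ _ (hbpos _), PowerSeries.coeff_mk]
  -- goal: ∑ k, ∑ j ∈ range (m+1), (if b^k*j ≤ m then coeff (m - b^k*j) else 0) * solCoef j = 0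
  by_cases h1 : m < v
  · refine Finset.sum_eq_zero fun k _ => Finset.sum_eq_zero fun j _ => ?_
    split_ifs with h
    · rw [hcz k _ (by omega), zero_mul]
    · rw [zero_mul]
  by_cases h2 : m = v
  · subst h2
    have hk : ∀ k : Fin (r+1), ∑ j ∈ Finset.range (v+1),
        (if b ^ (k:ℕ) * j ≤ v then (ℓ k).coeff (v - b ^ (k:ℕ)*j) else 0) * solCoef b r v ℓ j
        = (ℓ k).coeff v := by
      intro k
      rw [Finset.sum_eq_single_of_mem 0 (Finset.mem_range.mpr (by omega))]
      · simp [solCoef]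
      · intro j _ hj
        have h1j : 1 ≤ b ^ (k:ℕ) * j :=
          Nat.one_le_iff_ne_zero.mpr (by positivity)
        split_ifs with h
        · rw [hcz k _ (by omega), zero_mul]
        · rw [zero_mul]
    rw [Finset.sum_congr rfl (fun k _ => hk k)]
    exact hadm
  · obtain ⟨n, rfl⟩ : ∃ n, m = n + 1 + v := ⟨m - v - 1, by omega⟩
    set S := ∑ k : Fin (r+1), ∑ j ∈ Finset.range (n+1),
      (if b ^ (k:ℕ) * j ≤ n+1+v then (ℓ k).coeff (n+1+v - b ^ (k:ℕ) * j) else 0)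
        * solCoef b r v ℓ j with hS
    have hsol : (ℓ 0).coeff v * solCoef b r v ℓ (n+1) = -S := by
      have : solCoef b r v ℓ (n+1) = -((ℓ 0).coeff v)⁻¹ * S := by
        rw [hS]
        simp only [solCoef]
        congr 1
        refine Finset.sum_congr rfl fun k _ => ?_
        exact Finset.sum_attach (Finset.range (n+1)) (fun j =>
          (if b ^ (k:ℕ) * j ≤ n+1+v then (ℓ k).coeff (n+1+v - b ^ (k:ℕ) * j) else 0)
            * solCoef b r v ℓ j)
      rw [this]
      field_simp
    have hsplit : ∀ k : Fin (r+1), ∑ j ∈ Finset.range (n+1+v+1),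
        (if b ^ (k:ℕ) * j ≤ n+1+v then (ℓ k).coeff (n+1+v - b ^ (k:ℕ)*j) else 0)
          * solCoef b r v ℓ j
        = (∑ j ∈ Finset.range (n+1),
            (if b ^ (k:ℕ) * j ≤ n+1+v then (ℓ k).coeff (n+1+v - b ^ (k:ℕ)*j) else 0)
              * solCoef b r v ℓ j)
          + (if k = 0 then (ℓ 0).coeff v * solCoef b r v ℓ (n+1) else 0) := by
      intro k
      rw [Finset.range_eq_Ico, ← Finset.sum_Ico_consecutive _ (Nat.zero_le (n+1)) (by omega),
        ← Finset.range_eq_Ico]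
      congr 1
      rw [Finset.sum_eq_single_of_mem (n+1) (by simp [Finset.mem_Ico])]
      · by_cases hk : k = 0
        · subst hk
          have hnv : n + 1 + v - (n + 1) = v := by omega
          simp [show ((0:Fin (r+1)):ℕ) = 0 from rfl, hnv,
            show n + 1 ≤ n + 1 + v by omega]
        · have hk1 : 1 ≤ (k:ℕ) := by
            rcases Nat.eq_zero_or_pos (k:ℕ) with h | h
            · exact absurd (Fin.ext h) hk
            · exact h
          have hbk : 2 ≤ b ^ (k:ℕ) :=
            le_trans hb (Nat.le_self_pow (by omega) b)
          have : n + 2 ≤ b ^ (k:ℕ) * (n+1) := by nlinarith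
          simp only [if_neg hk]
          split_ifs with h
          · rw [hcz k _ (by omega), zero_mul]
          · rw [zero_mul]
      · intro j hj hjne
        have hjge : n + 2 ≤ j := by
          simp [Finset.mem_Ico] at hj; omega
        have : j ≤ b ^ (k:ℕ) * j := Nat.le_mul_of_pos_left j (hbpos k)
        split_ifs with h
        · rw [hcz k _ (by omega), zero_mul]
        · rw [zero_mul]
    rw [Finset.sum_congr rfl (fun k _ => hsplit k), Finset.sum_add_distrib, ← hS,
      Finset.sum_ite_eq' Finset.univ (0 : Fin (r+1))
        (fun _ => (ℓ 0).coeff v * solCoef b r v ℓ (n+1))]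
    simp [hsol]
end
end
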